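/- Let d ≥ 2, r ≥ 1, ε > 0, and let γ₁, …, γ_r ∈ SL_d(ℝ) be matrices such that the 2r matrices γ₁, …, γ_r, γ₁⁻¹, …, γ_r⁻¹ are pairwise distinct and form a symmetric set S of proximal matrices with both S and the dual set S* ε-Schottky. Then the group homomorphism from the free group F_r on r generators to SL_d(ℝ) sending the i-th free generator to γᵢ is injective; in particular, the subgroup of SL_d(ℝ) generated by γ₁, …, γ_r is a free group of rank r. -/

import Mathlib

open Polynomial Filter
open scoped Classical

noncomputable section

namespace Amalgam

variable {W : Type*} [NormedAddCommGroup W] [NormedSpace ℝ W]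

/-- The distance between two subspaces of a normed space: the infimum of `‖x - y‖` over
unit vectors `x ∈ X`, `y ∈ Y`.  For one-dimensional subspaces this is the metric on
projective space; for a line and a hyperplane it is the distance from the point of
projective space to the subset of projective space determined by the hyperplane. -/
def sdist (X Y : Submodule ℝ W) : ℝ :=
  sInf {r : ℝ | ∃ x ∈ X, ∃ y ∈ Y, ‖x‖ = 1 ∧ ‖y‖ = 1 ∧ r = ‖x - y‖}

/-- A point of projective space, i.e. a line through the origin. -/
def IsLine (X : Submodule ℝ W) : Prop := Module.finrank ℝ X = 1

/-- The diameter of the projective space of `W`. -/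
def projDiam (W : Type*) [NormedAddCommGroup W] [NormedSpace ℝ W] : ℝ :=
  sSup {t : ℝ | ∃ X Y : Submodule ℝ W, IsLine X ∧ IsLine Y ∧ t = sdist X Y}

variable [FiniteDimensional ℝ W]

/-- `f` is proximal: its characteristic polynomial has a unique complex root of maximal
modulus, and this root is real with multiplicity one. -/
def IsProximal (f : W →ₗ[ℝ] W) : Prop :=
  ∃ lam : ℝ,
    (Polynomial.map (algebraMap ℝ ℂ) (LinearMap.charpoly f)).roots.count (lam : ℂ) = 1 ∧
    ∀ μ ∈ (Polynomial.map (algebraMap ℝ ℂ) (LinearMap.charpoly f)).roots,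
      μ ≠ (lam : ℂ) → ‖μ‖ < |lam|

/-- The top eigenvalue of a proximal transformation (junk value `0` otherwise). -/
def topEig (f : W →ₗ[ℝ] W) : ℝ :=
  if h : IsProximal f then h.choose else 0

/-- The attracting eigenline `γ⁺` of a proximal transformation: the eigenspace of the
eigenvalue of maximal modulus. -/
def attLine (f : W →ₗ[ℝ] W) : Submodule ℝ W :=
  LinearMap.ker (f - topEig f • LinearMap.id)

/-- The repelling hyperplane `γ⁻` of a proximal transformation: the unique invariant
complement of the attracting line. -/
def repHyp (f : W →ₗ[ℝ] W) : Submodule ℝ W :=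
  if h : ∃ H : Submodule ℝ W, Submodule.map f H ≤ H ∧ IsCompl (attLine f) H
  then h.choose else ⊥

/-- `f` is `ε`-proximal: it is proximal, `dist(γ⁺, γ⁻) ≥ 2ε`, the induced action on
projective space is `ε`-Lipschitz on `B(γ⁻, ε)`, and maps `B(γ⁻, ε)` into `b(γ⁺, ε)`. -/
def IsEpsProximal (ε : ℝ) (f : W →ₗ[ℝ] W) : Prop :=
  IsProximal f ∧
  2 * ε ≤ sdist (attLine f) (repHyp f) ∧
  (∀ X Y : Submodule ℝ W, IsLine X → IsLine Y →
      ε ≤ sdist X (repHyp f) → ε ≤ sdist Y (repHyp f) →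
      sdist (X.map f) (Y.map f) ≤ ε * sdist X Y) ∧
  (∀ X : Submodule ℝ W, IsLine X → ε ≤ sdist X (repHyp f) →
      ε ≥ sdist (X.map f) (attLine f))

/-- An indexed family `f` (with `g i` playing the role of `(f i)⁻¹`) is `ε`-Schottky:
each member is `ε`-proximal and `dist((fᵢ)⁺, (fⱼ⁻¹)⁻) ≥ 6ε` for `i ≠ j`. -/
def IsSchottkyFam {ι : Type*} (ε : ℝ) (f g : ι → (W →ₗ[ℝ] W)) : Prop :=
  (∀ i, IsEpsProximal ε (f i)) ∧
  ∀ i j, i ≠ j → 6 * ε ≤ sdist (attLine (f i)) (repHyp (g j))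


abbrev E (d : ℕ) := EuclideanSpace ℝ (Fin d)
abbrev SL (d : ℕ) := Matrix.SpecialLinearGroup (Fin d) ℝ
abbrev Dual' (d : ℕ) := StrongDual ℝ (E d)

/-- The linear endomorphism of Euclidean space determined by a matrix in `SL_d(ℝ)`. -/
def toEnd {d : ℕ} (g : SL d) : E d →ₗ[ℝ] E d :=
  Matrix.toEuclideanLin (g : Matrix (Fin d) (Fin d) ℝ)

/-- The same map as a continuous linear map. -/
def toCLM {d : ℕ} (g : SL d) : E d →L[ℝ] E d :=
  LinearMap.toContinuousLinearMap (toEnd g)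

/-- The dual transformation `γ* : θ ↦ θ ∘ γ⁻¹` acting on the dual space `(ℝ^d)*`
(equipped with the dual norm). -/
def dualEnd {d : ℕ} (g : SL d) : Dual' d →ₗ[ℝ] Dual' d where
  toFun θ := θ.comp (toCLM g⁻¹)
  map_add' θ₁ θ₂ := by ext v; simp
  map_smul' c θ := by ext v; simp

/-- The kernel of a set of functionals: `{v : φ(v) = 0 for all φ ∈ Y}`. -/
def dualKer {d : ℕ} (Y : Submodule ℝ (Dual' d)) : Submodule ℝ (E d) where
  carrier := {v | ∀ φ ∈ Y, φ v = 0}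
  add_mem' := by
    intro a b ha hb φ hφ
    simp [map_add, ha φ hφ, hb φ hφ]
  zero_mem' := by intro φ hφ; simp
  smul_mem' := by
    intro c a ha φ hφ
    simp [ha φ hφ]

/-- The annihilator of a subspace inside the dual space. -/
def annih {d : ℕ} (U : Submodule ℝ (E d)) : Submodule ℝ (Dual' d) where
  carrier := {φ | ∀ v ∈ U, φ v = 0}
  add_mem' := by
    intro a b ha hb v hv
    simp [ha v hv, hb v hv]
  zero_mem' := by intro v hv; simp
  smul_mem' := by
    intro c a ha v hv
    simp [ha v hv]

/-- The operator norm of `g ∈ SL_d(ℝ)` (with respect to the Euclidean norm). -/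
def opN {d : ℕ} (g : SL d) : ℝ := ‖toCLM g‖

/-- The second compound matrix of a `d × d` matrix: the matrix of `2 × 2` minors,
indexed by increasingly ordered pairs. -/
def compound2 {d : ℕ} (g : Matrix (Fin d) (Fin d) ℝ) :
    Matrix {p : Fin d × Fin d // p.1 < p.2} {p : Fin d × Fin d // p.1 < p.2} ℝ :=
  fun p q => g p.1.1 q.1.1 * g p.1.2 q.1.2 - g p.1.1 q.1.2 * g p.1.2 q.1.1

/-- The operator norm of the second compound matrix (Euclidean norms). -/
def c2norm {d : ℕ} (g : Matrix (Fin d) (Fin d) ℝ) : ℝ :=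
  ‖LinearMap.toContinuousLinearMap (Matrix.toEuclideanLin (compound2 g))‖


/-- A reduced word in the set `S`: a nonempty finite sequence of elements of `S` in which
no letter is followed by its inverse. -/
def IsReducedWord {d : ℕ} (S : Set (SL d)) (w : List (SL d)) : Prop :=
  w ≠ [] ∧ (∀ a ∈ w, a ∈ S) ∧ List.Chain' (fun a b => b ≠ a⁻¹) w

/-- An infinite reduced word in the set `S`. -/
def IsInfReducedWord {d : ℕ} (S : Set (SL d)) (x : ℕ → SL d) : Prop :=
  (∀ i, x i ∈ S) ∧ ∀ i, x (i + 1) ≠ (x i)⁻¹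

/-- The partial product `x₀ x₁ ⋯ x_n` of an infinite word. -/
def wordProd {d : ℕ} (x : ℕ → SL d) (n : ℕ) : SL d :=
  ((List.range (n + 1)).map x).prod

/-- A family of matrices is symmetric if it is closed under inverses. -/
def SymmFam {ι : Type*} {d : ℕ} (γ : ι → SL d) : Prop :=
  ∀ i, ∃ j, γ j = (γ i)⁻¹

/-- The family `γ` is `ε`-Schottky as acting on `ℙ(ℝ^d)`. -/
def PrimalSchottky {ι : Type*} {d : ℕ} (ε : ℝ) (γ : ι → SL d) : Prop :=
  IsSchottkyFam ε (fun i => toEnd (γ i)) (fun i => toEnd ((γ i)⁻¹))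

/-- The dual family `γ*` is `ε`-Schottky as acting on `ℙ((ℝ^d)*)`. -/
def DualSchottky {ι : Type*} {d : ℕ} (ε : ℝ) (γ : ι → SL d) : Prop :=
  IsSchottkyFam ε (fun i => dualEnd (γ i)) (fun i => dualEnd ((γ i)⁻¹))

/-- `g` is biproximal: both `g` and `g⁻¹` are proximal. -/
def IsBiproximal {d : ℕ} (g : SL d) : Prop :=
  IsProximal (toEnd g) ∧ IsProximal (toEnd g⁻¹)

/-- A symmetric family of pairwise distinct biproximal matrices is well-positioned if the
attracting lines are pairwise distinct and `γᵢ⁺ ⊄ γⱼ⁻` whenever `γⱼ ≠ γᵢ⁻¹`. -/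
def WellPositioned {ι : Type*} {d : ℕ} (γ : ι → SL d) : Prop :=
  (∀ i, IsBiproximal (γ i)) ∧
  (∀ i j, i ≠ j → attLine (toEnd (γ i)) ≠ attLine (toEnd (γ j))) ∧
  (∀ i j, γ j ≠ (γ i)⁻¹ → ¬ attLine (toEnd (γ i)) ≤ repHyp (toEnd (γ j)))

/-- The spectral radius: maximal modulus of the complex roots of the characteristic
polynomial. -/
def specRad {W : Type*} [NormedAddCommGroup W] [NormedSpace ℝ W] [FiniteDimensional ℝ W]
    (f : W →ₗ[ℝ] W) : ℝ :=
  sSup {t : ℝ | ∃ μ ∈ (Polynomial.map (algebraMap ℝ ℂ) (LinearMap.charpoly f)).roots,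
      t = ‖μ‖}


section Aux

variable {W : Type*} [NormedAddCommGroup W] [NormedSpace ℝ W]

lemma sdist_set_bddBelow (X Y : Submodule ℝ W) :
    BddBelow {r : ℝ | ∃ x ∈ X, ∃ y ∈ Y, ‖x‖ = 1 ∧ ‖y‖ = 1 ∧ r = ‖x - y‖} := by
  refine ⟨0, ?_⟩
  rintro r ⟨x, hx, y, hy, hx1, hy1, rfl⟩
  positivity

lemma sdist_nonneg' (X Y : Submodule ℝ W) : 0 ≤ sdist X Y := by
  apply Real.sInf_nonneg
  rintro r ⟨x, hx, y, hy, hx1, hy1, rfl⟩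
  positivity

lemma sdist_le {X Y : Submodule ℝ W} {x y : W} (hx : x ∈ X) (hy : y ∈ Y)
    (hx1 : ‖x‖ = 1) (hy1 : ‖y‖ = 1) : sdist X Y ≤ ‖x - y‖ :=
  csInf_le (sdist_set_bddBelow X Y) ⟨x, hx, y, hy, hx1, hy1, rfl⟩

lemma sdist_comm (X Y : Submodule ℝ W) : sdist X Y = sdist Y X := by
  unfold sdist
  congr 1
  ext r
  constructor
  · rintro ⟨x, hx, y, hy, hx1, hy1, rfl⟩
    exact ⟨y, hy, x, hx, hy1, hx1, (norm_sub_rev x y)⟩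
  · rintro ⟨x, hx, y, hy, hx1, hy1, rfl⟩
    exact ⟨y, hy, x, hx, hy1, hx1, (norm_sub_rev x y)⟩

lemma exists_units_of_sdist_pos {X Y : Submodule ℝ W} (h : 0 < sdist X Y) :
    (∃ x ∈ X, ‖x‖ = 1) ∧ ∃ y ∈ Y, ‖y‖ = 1 := by
  by_contra hc
  have hempty : {r : ℝ | ∃ x ∈ X, ∃ y ∈ Y, ‖x‖ = 1 ∧ ‖y‖ = 1 ∧ r = ‖x - y‖} = ∅ := by
    ext r
    simp only [Set.mem_setOf_eq, Set.mem_empty_iff_false, iff_false]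
    rintro ⟨x, hx, y, hy, hx1, hy1, rfl⟩
    exact hc ⟨⟨x, hx, hx1⟩, ⟨y, hy, hy1⟩⟩
  rw [sdist, hempty, Real.sInf_empty] at h
  exact lt_irrefl 0 h

lemma sdist_le_two {X Y : Submodule ℝ W} (hX : ∃ x ∈ X, ‖x‖ = 1) (hY : ∃ y ∈ Y, ‖y‖ = 1) :
    sdist X Y ≤ 2 := by
  obtain ⟨x, hx, hx1⟩ := hX
  obtain ⟨y, hy, hy1⟩ := hY
  refine le_trans (sdist_le hx hy hx1 hy1) ?_
  calc ‖x - y‖ ≤ ‖x‖ + ‖y‖ := norm_sub_le x y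
  _ = 2 := by rw [hx1, hy1]; norm_num

lemma sdist_mono {X X' Z : Submodule ℝ W} (h : X' ≤ X) (hX' : ∃ x ∈ X', ‖x‖ = 1)
    (hZ : ∃ z ∈ Z, ‖z‖ = 1) : sdist X Z ≤ sdist X' Z := by
  obtain ⟨x, hx, hx1⟩ := hX'
  obtain ⟨z, hz, hz1⟩ := hZ
  unfold sdist
  refine csInf_le_csInf (sdist_set_bddBelow X Z) ?_ ?_
  · exact ⟨‖x - z‖, x, hx, z, hz, hx1, hz1, rfl⟩
  · rintro r ⟨a, ha, b, hb, ha1, hb1, rfl⟩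
    exact ⟨a, h ha, b, hb, ha1, hb1, rfl⟩

variable [FiniteDimensional ℝ W]

lemma line_eq_span {X : Submodule ℝ W} (hX : IsLine X) {u : W} (hu : u ∈ X) (hu0 : u ≠ 0) :
    X = Submodule.span ℝ {u} := by
  refine (Submodule.eq_of_le_of_finrank_le ?_ ?_).symm
  · rwa [Submodule.span_le, Set.singleton_subset_iff]
  · rw [hX, finrank_span_singleton hu0]

lemma line_unit {X : Submodule ℝ W} (hX : IsLine X) : ∃ u ∈ X, ‖u‖ = 1 := by
  have hbot : X ≠ ⊥ := by
    intro h
    rw [IsLine, h, finrank_bot] at hX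
    exact absurd hX (by norm_num)
  obtain ⟨v, hv, hv0⟩ := Submodule.exists_mem_ne_zero_of_ne_bot hbot
  have hnv : ‖v‖ ≠ 0 := norm_ne_zero_iff.mpr hv0
  refine ⟨‖v‖⁻¹ • v, X.smul_mem _ hv, ?_⟩
  rw [norm_smul, norm_inv, norm_norm, inv_mul_cancel₀ hnv]

lemma unit_pm {X : Submodule ℝ W} (hX : IsLine X) {u x : W} (hu : u ∈ X) (hu1 : ‖u‖ = 1)
    (hx : x ∈ X) (hx1 : ‖x‖ = 1) : x = u ∨ x = -u := by
  have hu0 : u ≠ 0 := by intro h; rw [h, norm_zero] at hu1; norm_num at hu1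
  have hspan := line_eq_span hX hu hu0
  rw [hspan, Submodule.mem_span_singleton] at hx
  obtain ⟨c, rfl⟩ := hx
  rw [norm_smul, hu1, mul_one, Real.norm_eq_abs] at hx1
  rcases (abs_eq (zero_le_one)).mp hx1 with h | h
  · left; rw [h, one_smul]
  · right; rw [h, neg_smul, one_smul]

/-- Reverse triangle inequality for `sdist`, with the first argument a line. -/
lemma sdist_triangle {X Y Z : Submodule ℝ W} (hX : IsLine X)
    (hY : ∃ y ∈ Y, ‖y‖ = 1) (hZ : ∃ z ∈ Z, ‖z‖ = 1) :
    sdist Y Z - sdist X Y ≤ sdist X Z := by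
  obtain ⟨u, huX, hu1⟩ := line_unit hX
  obtain ⟨y₀, hy₀, hy₀1⟩ := hY
  obtain ⟨z₀, hz₀, hz₀1⟩ := hZ
  rw [show sdist X Z = sInf {r : ℝ | ∃ x ∈ X, ∃ y ∈ Z, ‖x‖ = 1 ∧ ‖y‖ = 1 ∧ r = ‖x - y‖} from rfl]
  refine le_csInf ?_ ?_
  · exact ⟨‖u - z₀‖, u, huX, z₀, hz₀, hu1, hz₀1, rfl⟩
  rintro r ⟨x, hx, z, hz, hx1, hz1, rfl⟩
  refine le_of_forall_pos_le_add ?_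
  intro δ hδ
  -- pick a near-optimal pair for sdist X Y
  have hlt : sdist X Y < sdist X Y + δ := by linarith
  obtain ⟨r', ⟨x', hx', y, hy, hx'1, hy1, rfl⟩, hr'⟩ :=
    (csInf_lt_iff (sdist_set_bddBelow X Y) ⟨‖u - y₀‖, u, huX, y₀, hy₀, hu1, hy₀1, rfl⟩).mp hlt
  -- adjust the sign of y so that it pairs with x
  have hxx' : ‖x - (if x = x' then y else -y)‖ = ‖x' - y‖ := by
    split_ifs with hxe
    · rw [hxe]
    · have h1 := unit_pm hX huX hu1 hx hx1
      have h2 := unit_pm hX huX hu1 hx' hx'1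
      have hxn : x = -x' := by
        rcases h1 with rfl | rfl <;> rcases h2 with rfl | rfl
        · exact absurd rfl hxe
        · rw [neg_neg]
        · rfl
        · exact absurd rfl hxe
      rw [hxn, show -x' - -y = -(x' - y) by rw [neg_sub_neg, ← neg_sub], norm_neg]

  set y' := if x = x' then y else -y with hy'def
  have hy'Y : y' ∈ Y := by rw [hy'def]; split_ifs; exacts [hy, Y.neg_mem hy]
  have hy'1 : ‖y'‖ = 1 := by rw [hy'def]; split_ifs; exacts [hy1, by rw [norm_neg]; exact hy1]
  have h1 : sdist Y Z ≤ ‖y' - z‖ := sdist_le hy'Y hz hy'1 hz1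
  have h2 : ‖y' - z‖ ≤ ‖y' - x‖ + ‖x - z‖ := by
    have := dist_triangle y' x z
    simpa [dist_eq_norm] using this
  have h3 : ‖y' - x‖ < sdist X Y + δ := by rw [norm_sub_rev, hxx']; exact hr'
  linarith

lemma sdist_pos_of_ne {X Y : Submodule ℝ W} (hX : IsLine X) (hY : IsLine Y) (hne : X ≠ Y) :
    0 < sdist X Y := by
  obtain ⟨u, huX, hu1⟩ := line_unit hX
  obtain ⟨v, hvY, hv1⟩ := line_unit hY
  have hu0 : u ≠ 0 := by intro h; rw [h, norm_zero] at hu1; norm_num at hu1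
  have hv0 : v ≠ 0 := by intro h; rw [h, norm_zero] at hv1; norm_num at hv1
  have h1 : u - v ≠ 0 := by
    intro h
    apply hne
    rw [line_eq_span hX huX hu0, line_eq_span hY hvY hv0, sub_eq_zero.mp h]
  have h2 : u + v ≠ 0 := by
    intro h
    apply hne
    have huv : u = -v := eq_neg_of_add_eq_zero_left h
    have hsp : Submodule.span ℝ ({-v} : Set W) = Submodule.span ℝ {v} := by
      apply le_antisymm <;> rw [Submodule.span_le, Set.singleton_subset_iff]
      · exact Submodule.neg_mem _ (Submodule.mem_span_singleton_self v)
      · simpa using Submodule.neg_mem _ (Submodule.mem_span_singleton_self (-v))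
    rw [line_eq_span hX huX hu0, line_eq_span hY hvY hv0, huv, hsp]
  have hm : 0 < min ‖u - v‖ ‖u + v‖ :=
    lt_min (norm_pos_iff.mpr h1) (norm_pos_iff.mpr h2)
  refine lt_of_lt_of_le hm ?_
  rw [show sdist X Y = sInf {r : ℝ | ∃ x ∈ X, ∃ y ∈ Y, ‖x‖ = 1 ∧ ‖y‖ = 1 ∧ r = ‖x - y‖} from rfl]
  refine le_csInf ?_ ?_
  · exact ⟨‖u - v‖, u, huX, v, hvY, hu1, hv1, rfl⟩
  rintro r ⟨x, hx, y, hy, hx1, hy1, rfl⟩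
  rcases unit_pm hX huX hu1 hx hx1 with h1 | h1 <;>
    rcases unit_pm hY hvY hv1 hy hy1 with h2 | h2 <;> rw [h1, h2]
  · exact min_le_left _ _
  · rw [sub_neg_eq_add]; exact min_le_right _ _
  · rw [show -u - v = -(u + v) by rw [neg_add, ← sub_eq_add_neg], norm_neg]
    exact min_le_right _ _
  · rw [neg_sub_neg, norm_sub_rev]
    exact min_le_left _ _

end Aux


section Aux2

variable {d : ℕ}

lemma toEnd_mul (a b : SL d) : toEnd (a * b) = (toEnd a).comp (toEnd b) := by
  ext x
  simp [toEnd, Matrix.toEuclideanLin_apply, Matrix.mulVec_mulVec]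

lemma toEnd_one : toEnd (1 : SL d) = LinearMap.id := by
  ext x
  simp [toEnd, Matrix.toEuclideanLin_apply]

lemma map_toEnd_line (g : SL d) {X : Submodule ℝ (E d)} (hX : IsLine X) :
    IsLine (X.map (toEnd g)) := by
  have h1 : (toEnd g).comp (toEnd g⁻¹) = LinearMap.id := by
    rw [← toEnd_mul, mul_inv_cancel, toEnd_one]
  have h2 : (toEnd g⁻¹).comp (toEnd g) = LinearMap.id := by
    rw [← toEnd_mul, inv_mul_cancel, toEnd_one]
  let e : E d ≃ₗ[ℝ] E d := LinearEquiv.ofLinear (toEnd g) (toEnd g⁻¹) h1 h2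
  have : X.map (toEnd g) = X.map (e : E d →ₗ[ℝ] E d) := rfl
  rw [IsLine, this, LinearEquiv.finrank_map_eq e X, ← IsLine]
  exact hX

lemma reduce_tail {α : Type*} [DecidableEq α] {a : α × Bool} {L : List (α × Bool)}
    (h : FreeGroup.reduce (a :: L) = a :: L) : FreeGroup.reduce L = L := by
  rw [FreeGroup.reduce.cons] at h
  rcases hL : FreeGroup.reduce L with _ | ⟨y, t⟩
  · rw [hL] at h
    simp only [List.cons.injEq, true_and] at h
    have h2 : L = [] := by simpa [eq_comm] using h
    rw [h2]
  · rw [hL] at h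
    dsimp only at h
    by_cases hc : a.1 = y.1 ∧ a.2 = !y.2
    · rw [if_pos hc] at h
      have h1 := FreeGroup.Red.length_le (FreeGroup.reduce.red (L := L))
      rw [hL, h] at h1
      simp at h1
    · rw [if_neg hc] at h
      simp only [List.cons.injEq, true_and] at h
      exact h

lemma chain'_of_reduced {α : Type*} [DecidableEq α] : ∀ {L : List (α × Bool)}, FreeGroup.reduce L = L →
    List.Chain' (fun a b => b ≠ (a.1, !a.2)) L
  | [], _ => List.isChain_nil
  | [a], _ => List.isChain_singleton a
  | a :: b :: T, h => by
    refine List.IsChain.cons_cons ?_ (chain'_of_reduced (reduce_tail h))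
    intro hb
    exact FreeGroup.reduce.not (L₂ := []) (L₃ := T) (x := a.1) (b := a.2)
      (by rw [h, hb]; rfl)

end Aux2

set_option maxHeartbeats 1600000 in
/-- a Schottky family generates a free group of rank `r`. -/
theorem statement5 (d r : ℕ) (hd : 2 ≤ d) (hr : 1 ≤ r) (ε : ℝ) (hε : 0 < ε)
    (γ : Fin r → SL d)
    (hdist : Function.Injective (Sum.elim γ (fun i => (γ i)⁻¹) : Fin r ⊕ Fin r → SL d))
    (hprox : ∀ i : Fin r ⊕ Fin r, IsProximal (toEnd (Sum.elim γ (fun i => (γ i)⁻¹) i)))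
    (hS : PrimalSchottky ε (Sum.elim γ (fun i => (γ i)⁻¹)))
    (hS' : DualSchottky ε (Sum.elim γ (fun i => (γ i)⁻¹))) :
    Function.Injective (FreeGroup.lift γ : FreeGroup (Fin r) →* SL d) := by
  classical
  set Γ : Fin r ⊕ Fin r → SL d := Sum.elim γ (fun i => (γ i)⁻¹) with hΓdef
  have hprox1 : ∀ i, IsEpsProximal ε (toEnd (Γ i)) := hS.1
  have hsch : ∀ i j, i ≠ j →
      6 * ε ≤ sdist (attLine (toEnd (Γ i))) (repHyp (toEnd ((Γ j)⁻¹))) := hS.2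
  set sw : Fin r ⊕ Fin r → Fin r ⊕ Fin r := Sum.elim Sum.inr Sum.inl with hswdef
  have hswap : ∀ j, Γ (sw j) = (Γ j)⁻¹ := by
    rintro (i | i)
    · rfl
    · show γ i = ((γ i)⁻¹)⁻¹
      rw [inv_inv]
  set idx : Fin r × Bool → Fin r ⊕ Fin r :=
    fun p => if p.2 then Sum.inl p.1 else Sum.inr p.1 with hidxdef
  have hidx_inj : Function.Injective idx := by
    rintro ⟨i, b⟩ ⟨i', b'⟩ h
    cases b <;> cases b' <;> simp [hidxdef] at h <;> simp [h]
  have hsw_idx : ∀ p : Fin r × Bool, sw (idx p) = idx (p.1, !p.2) := by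
    rintro ⟨i, b⟩; cases b <;> rfl
  have hΓidx : ∀ p : Fin r × Bool, Γ (idx p) = cond p.2 (γ p.1) (γ p.1)⁻¹ := by
    rintro ⟨i, b⟩; cases b <;> rfl
  have hAR : ∀ i, 0 < sdist (attLine (toEnd (Γ i))) (repHyp (toEnd (Γ i))) :=
    fun i => lt_of_lt_of_le (by linarith) (hprox1 i).2.1
  have hAu : ∀ i, ∃ a ∈ attLine (toEnd (Γ i)), ‖a‖ = 1 :=
    fun i => (exists_units_of_sdist_pos (hAR i)).1
  have hRu : ∀ i, ∃ a ∈ repHyp (toEnd (Γ i)), ‖a‖ = 1 :=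
    fun i => (exists_units_of_sdist_pos (hAR i)).2
  have hSch : ∀ i j, i ≠ sw j →
      6 * ε ≤ sdist (attLine (toEnd (Γ i))) (repHyp (toEnd (Γ j))) := by
    intro i j hij
    have h := hsch i (sw j) hij
    rwa [hswap j, inv_inv] at h
  have heps13 : ε ≤ 1/3 := by
    have hi0 : (Sum.inl ⟨0, hr⟩ : Fin r ⊕ Fin r) ≠ sw (Sum.inl ⟨0, hr⟩) := by
      simp [hswdef]
    have h6 := hSch _ _ hi0
    have h2 := sdist_le_two (hAu (Sum.inl ⟨0, hr⟩)) (hRu (Sum.inl ⟨0, hr⟩))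
    linarith
  -- core ping-pong induction
  have core : ∀ J : List (Fin r ⊕ Fin r), List.Chain' (fun a b => b ≠ sw a) J →
      ∀ jl, J.getLast? = some jl →
      ∀ jh, J.head? = some jh →
      ∀ X X' : Submodule ℝ (E d), IsLine X → IsLine X' →
      ε ≤ sdist X (repHyp (toEnd (Γ jl))) → ε ≤ sdist X' (repHyp (toEnd (Γ jl))) →
      IsLine (X.map (toEnd (J.map Γ).prod)) ∧ IsLine (X'.map (toEnd (J.map Γ).prod)) ∧
      sdist (X.map (toEnd (J.map Γ).prod)) (attLine (toEnd (Γ jh))) ≤ ε ∧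
      sdist (X'.map (toEnd (J.map Γ).prod)) (attLine (toEnd (Γ jh))) ≤ ε ∧
      sdist (X.map (toEnd (J.map Γ).prod)) (X'.map (toEnd (J.map Γ).prod))
        ≤ ε * sdist X X' := by
    intro J
    induction J with
    | nil => intro _ jl h; simp at h
    | cons j T ih =>
      intro hchain jl hjl jh hjh X X' hX hX' hXd hX'd
      simp only [List.head?_cons, Option.some.injEq] at hjh
      subst hjh
      cases T with
      | nil =>
        simp only [List.getLast?_singleton, Option.some.injEq] at hjl
        subst hjl
        simp only [List.map_cons, List.map_nil, List.prod_cons, List.prod_nil, mul_one]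
        refine ⟨map_toEnd_line _ hX, map_toEnd_line _ hX', ?_, ?_, ?_⟩
        · exact (hprox1 j).2.2.2 X hX hXd
        · exact (hprox1 j).2.2.2 X' hX' hX'd
        · exact (hprox1 j).2.2.1 X X' hX hX' hXd hX'd
      | cons j' T' =>
        have hch := List.isChain_cons_cons.mp hchain
        have hlast : (j' :: T').getLast? = some jl := by
          rw [← hjl, List.getLast?_cons_cons]
        obtain ⟨hL1, hL2, hB1, hB2, hC⟩ := ih hch.2 jl hlast j' rfl X X' hX hX' hXd hX'd
        have hmap : ∀ Z : Submodule ℝ (E d),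
            Z.map (toEnd ((j :: j' :: T').map Γ).prod)
              = (Z.map (toEnd ((j' :: T').map Γ).prod)).map (toEnd (Γ j)) := by
          intro Z
          rw [List.map_cons, List.prod_cons, toEnd_mul, Submodule.map_comp]
        have hsep : 6 * ε ≤ sdist (attLine (toEnd (Γ j'))) (repHyp (toEnd (Γ j))) :=
          hSch j' j hch.1
        have hQXd : ε ≤ sdist (X.map (toEnd ((j' :: T').map Γ).prod))
            (repHyp (toEnd (Γ j))) := by
          have ht := sdist_triangle hL1 (hAu j') (hRu j)
          linarith
        have hQX'd : ε ≤ sdist (X'.map (toEnd ((j' :: T').map Γ).prod))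
            (repHyp (toEnd (Γ j))) := by
          have ht := sdist_triangle hL2 (hAu j') (hRu j)
          linarith
        rw [hmap X, hmap X']
        refine ⟨map_toEnd_line _ hL1, map_toEnd_line _ hL2, ?_, ?_, ?_⟩
        · exact (hprox1 j).2.2.2 _ hL1 hQXd
        · exact (hprox1 j).2.2.2 _ hL2 hQX'd
        · have h1 := (hprox1 j).2.2.1 _ _ hL1 hL2 hQXd hQX'd
          have h0 := sdist_nonneg' X X'
          have hq := mul_le_mul_of_nonneg_left hC hε.le
          have h2 : ε * (ε * sdist X X') ≤ ε * sdist X X' := by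
            nlinarith [mul_nonneg (by linarith : (0:ℝ) ≤ 1 - ε)
              (mul_nonneg hε.le h0)]
          exact le_trans h1 (le_trans hq h2)
  -- assembly
  rw [injective_iff_map_eq_one]
  intro w hw
  by_contra hne
  have hLnil : w.toWord ≠ [] := fun h => hne (FreeGroup.toWord_eq_nil_iff.mp h)
  have hred := FreeGroup.reduce_toWord w
  have hchainL := chain'_of_reduced hred
  set J : List (Fin r ⊕ Fin r) := w.toWord.map idx with hJdef
  have hJnil : J ≠ [] := by
    rw [hJdef]
    simpa using hLnil
  have hchainJ : List.Chain' (fun a b => b ≠ sw a) J := by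
    rw [hJdef]; unfold List.Chain'; rw [List.isChain_map]
    refine List.IsChain.imp ?_ hchainL
    intro a b hab h
    exact hab (hidx_inj (h.trans (hsw_idx a)))
  have hprodJ : ((J.map Γ).prod) = FreeGroup.lift γ w := by
    conv_rhs => rw [← FreeGroup.mk_toWord (x := w)]
    rw [FreeGroup.lift_mk, hJdef, List.map_map]
    congr 1
    apply List.map_congr_left
    intro p _
    exact hΓidx p
  obtain ⟨jl, hjl⟩ : ∃ jl, J.getLast? = some jl :=
    ⟨J.getLast hJnil, List.getLast?_eq_getLast hJnil⟩
  obtain ⟨jh, hjh⟩ : ∃ jh, J.head? = some jh :=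
    ⟨J.head hJnil, List.head?_eq_head hJnil⟩
  obtain ⟨u, huA, hu1⟩ := hAu jl
  obtain ⟨y₀, hyR, hy₀1⟩ := hRu jl
  have hu0 : u ≠ 0 := by intro h; rw [h, norm_zero] at hu1; norm_num at hu1
  set X : Submodule ℝ (E d) := Submodule.span ℝ ({u} : Set (E d)) with hXdef
  have hXline : IsLine X := finrank_span_singleton hu0
  have huX : u ∈ X := Submodule.mem_span_singleton_self u
  have hXA : X ≤ attLine (toEnd (Γ jl)) := by
    rw [hXdef, Submodule.span_le, Set.singleton_subset_iff]
    exact huA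
  have hX2 : 2 * ε ≤ sdist X (repHyp (toEnd (Γ jl))) :=
    le_trans (hprox1 jl).2.1 (sdist_mono hXA ⟨u, huX, hu1⟩ (hRu jl))
  set v : E d := u + (ε/2) • y₀ with hvdef
  have hvu : ‖v - u‖ = ε/2 := by
    rw [hvdef, add_sub_cancel_left, norm_smul, hy₀1, mul_one, Real.norm_eq_abs,
      abs_of_pos (by linarith)]
  have habs : |‖v‖ - 1| ≤ ε/2 := by
    have h := abs_norm_sub_norm_le v u
    rw [hu1, hvu] at h
    exact h
  have hv_norm_lb : (1 : ℝ) - ε/2 ≤ ‖v‖ := by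
    rcases abs_le.mp habs with ⟨h1, h2⟩
    linarith
  have hv0 : v ≠ 0 := by
    intro h
    rw [h, norm_zero] at hv_norm_lb
    linarith
  have hnv : ‖v‖ ≠ 0 := norm_ne_zero_iff.mpr hv0
  set vh : E d := ‖v‖⁻¹ • v with hvhdef
  have hvh1 : ‖vh‖ = 1 := by
    rw [hvhdef, norm_smul, norm_inv, norm_norm, inv_mul_cancel₀ hnv]
  have hvvh : ‖v - vh‖ = |‖v‖ - 1| := by
    have hsub : v - vh = (1 - ‖v‖⁻¹) • v := by
      rw [hvhdef, sub_smul, one_smul]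
    rw [hsub, norm_smul, Real.norm_eq_abs]
    calc |1 - ‖v‖⁻¹| * ‖v‖ = |(1 - ‖v‖⁻¹) * ‖v‖| := by
          rw [abs_mul, abs_of_nonneg (norm_nonneg v)]
      _ = |‖v‖ - 1| := by rw [sub_mul, one_mul, inv_mul_cancel₀ hnv, ← neg_sub, abs_neg]
  have hdiff : ‖u - vh‖ ≤ ε := by
    have h1 : ‖u - vh‖ ≤ ‖u - v‖ + ‖v - vh‖ := by
      have := dist_triangle u v vh
      simpa [dist_eq_norm] using this
    rw [norm_sub_rev] at hvu
    rw [hvvh] at h1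
    linarith
  set X' : Submodule ℝ (E d) := Submodule.span ℝ ({v} : Set (E d)) with hX'def
  have hX'line : IsLine X' := finrank_span_singleton hv0
  have hvhX' : vh ∈ X' := Submodule.smul_mem _ _ (Submodule.mem_span_singleton_self v)
  have hXX' : sdist X X' ≤ ε := le_trans (sdist_le huX hvhX' hu1 hvh1) hdiff
  have hX'X : sdist X' X ≤ ε := by rw [sdist_comm]; exact hXX'
  have hX'2 : ε ≤ sdist X' (repHyp (toEnd (Γ jl))) := by
    have ht := sdist_triangle hX'line ⟨u, huX, hu1⟩ (hRu jl)
    linarith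
  have hXne : X ≠ X' := by
    intro h
    have hvX : v ∈ X := h ▸ Submodule.mem_span_singleton_self v
    rw [hXdef, Submodule.mem_span_singleton] at hvX
    obtain ⟨c, hc⟩ := hvX
    have h1 : (ε/2) • y₀ = (c - 1) • u := by
      rw [sub_smul, one_smul, hc, hvdef]
      abel
    have hy : y₀ = ((2/ε) * (c - 1)) • u := by
      have h2 : (2/ε) • ((ε/2) • y₀) = y₀ := by
        rw [smul_smul, show (2/ε) * (ε/2) = 1 by field_simp, one_smul]
      rw [← h2, h1, smul_smul]
    have hyX : y₀ ∈ X := by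
      rw [hy]
      exact X.smul_mem _ huX
    have hle : sdist X (repHyp (toEnd (Γ jl))) ≤ 0 := by
      have := sdist_le hyX hyR hy₀1 hy₀1
      simpa using this
    linarith
  have hD : 0 < sdist X X' := sdist_pos_of_ne hXline hX'line hXne
  obtain ⟨-, -, -, -, hfin⟩ :=
    core J hchainJ jl hjl jh hjh X X' hXline hX'line (by linarith) hX'2
  rw [hprodJ, hw, toEnd_one] at hfin
  simp only [Submodule.map_id] at hfin
  nlinarith [mul_le_mul_of_nonneg_right heps13 hD.le, hfin, hD]

end Amalgam
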